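/- Let p be a prime, q > 1 a power of p, k ≥ 2 and m ≥ 1 integers. Then for every integer j with 0 ≤ j ≤ min(k−2, p^m−1) and every integer i with 0 ≤ i ≤ k−2, one has the exact equality of entries U^{(k+p^m)}_{i,j} = U^{(k)}_{i,j} in 𝔽_q[t]. -/

import Mathlib

open Polynomial

noncomputable section DrinfeldGM

/-- Integer-argument binomial coefficient `C(c,d)`, equal to `0` whenever any of
`c`, `d`, `c - d` is negative. -/
def intChoose (c d : ℤ) : ℤ :=
  if 0 ≤ c ∧ 0 ≤ d ∧ d ≤ c then (Nat.choose c.toNat d.toNat : ℤ) else 0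

/-- The `(i,j)` entry of the matrix of the `U`-operator on `S_k(Γ₁(t))` in the
Bandini–Valentino basis (here `t` is the polynomial variable `X`).  For `i = j` it is
`(-t)^j C(k-2-j, j)`; for `i = j + h(q-1)` with `h ≠ 0` (equivalently `(q-1) ∣ i - j`,
`i ≠ j`, in which case `h(q-1) = i - j`) it is
`-t^j (C(k-2-i, j-i) + (-1)^{j+1} C(k-2-i, j))`; and it is `0` otherwise. -/
def Uent (F : Type*) [Field F] (q k : ℕ) (i j : ℕ) : Polynomial F :=
  if i = j then
    (-Polynomial.X : Polynomial F) ^ j * ((intChoose ((k : ℤ) - 2 - (j : ℤ)) (j : ℤ) : ℤ) : Polynomial F)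
  else if ((q : ℤ) - 1) ∣ ((i : ℤ) - (j : ℤ)) then
    -((Polynomial.X : Polynomial F) ^ j *
      ((intChoose ((k : ℤ) - 2 - (i : ℤ)) ((j : ℤ) - (i : ℤ)) +
        (-1) ^ (j + 1) * intChoose ((k : ℤ) - 2 - (i : ℤ)) (j : ℤ) : ℤ) : Polynomial F))
  else 0

/-- The representing matrix `U^{(k)} ∈ M_{k-1}(𝔽_q[t])` of the `U`-operator on
`S_k(Γ₁(t))`, rows and columns indexed by `0, …, k-2`. -/
def Umat (F : Type*) [Field F] (q k : ℕ) :
    Matrix (Fin (k - 1)) (Fin (k - 1)) (Polynomial F) :=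
  Matrix.of fun i j => Uent F q k (i : ℕ) (j : ℕ)

/-- A matrix over `𝔽_q[[t]]` is *glissando* if every entry of its `j`-th column is an
`𝔽_q`-multiple of `t^j`. -/
def Glissando {F : Type*} [Field F] {m n : ℕ}
    (B : Matrix (Fin m) (Fin n) (PowerSeries F)) : Prop :=
  ∀ i j, ∃ c : F, B i j = PowerSeries.C c * (PowerSeries.X : PowerSeries F) ^ (j : ℕ)

/-- The inclusion `𝔽_q[t] → 𝔽_q[[t]]`. -/
def polyToPS (F : Type*) [Field F] : Polynomial F →+* PowerSeries F :=
  Polynomial.coeToPowerSeries.ringHom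

/-- The inclusion of `𝔽_q[[t]]` into a fixed algebraic closure `K̄` of `K = 𝔽_q((t))`. -/
def psToKbar (F : Type*) [Field F] :
    PowerSeries F →+* AlgebraicClosure (LaurentSeries F) :=
  (algebraMap (LaurentSeries F) (AlgebraicClosure (LaurentSeries F))).comp
    (algebraMap (PowerSeries F) (LaurentSeries F))

/-- The inclusion `𝔽_q[t] → K̄`. -/
def polyToKbar (F : Type*) [Field F] :
    Polynomial F →+* AlgebraicClosure (LaurentSeries F) :=
  (psToKbar F).comp (polyToPS F)

/-- The element `t` of `K̄`. -/
def tbar (F : Type*) [Field F] : AlgebraicClosure (LaurentSeries F) :=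
  psToKbar F PowerSeries.X

/-- Integrality over `𝔽_q[[t]]` of an element of `K̄`. -/
def IntegralPS (F : Type*) [Field F] (x : AlgebraicClosure (LaurentSeries F)) : Prop :=
  letI : Algebra (PowerSeries F) (AlgebraicClosure (LaurentSeries F)) := (psToKbar F).toAlgebra
  IsIntegral (PowerSeries F) x

/-- `HasVal F λ α` says that `λ ∈ K̄` is nonzero and has valuation `α` for the unique
extension `v` to `K̄` of the `t`-adic valuation with `v(t) = 1`: writing `α = a/b` with
`b > 0`, this means that both `λ^b/t^a` and `t^a/λ^b` are integral over `𝔽_q[[t]]`. -/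
def HasVal (F : Type*) [Field F] (lam : AlgebraicClosure (LaurentSeries F)) (α : ℚ) : Prop :=
  lam ≠ 0 ∧ ∃ a b : ℤ, 0 < b ∧ α = (a : ℚ) / (b : ℚ) ∧
    IntegralPS F (lam ^ b / tbar F ^ a) ∧ IntegralPS F (tbar F ^ a / lam ^ b)

/-- `d(k, α)`: the number of roots `λ` of `det(X·I - U^{(k)})` in `K̄` with `v(λ) = α`,
counted with multiplicity.  This is the dimension of the slope-`α` generalized eigenspace
of the `U`-operator on `S_k(Γ₁(t))`. -/
def dDim (F : Type*) [Field F] (q k : ℕ) (α : ℚ) : ℕ :=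
  letI := Classical.decPred fun lam : AlgebraicClosure (LaurentSeries F) => HasVal F lam α
  Multiset.card <| Multiset.filter (fun lam => HasVal F lam α) <|
    (((Umat F q k).charpoly).map (polyToKbar F)).roots

/-- `det(I - t^l X B)` for a square matrix `B` over `𝔽_q[[t]]`, as a polynomial in `X`
over `𝔽_q[[t]]`. -/
def charSeriesTw (F : Type*) [Field F] {m : ℕ} (l : ℕ)
    (B : Matrix (Fin m) (Fin m) (PowerSeries F)) : Polynomial (PowerSeries F) :=
  Matrix.det (1 - (Polynomial.C ((PowerSeries.X : PowerSeries F) ^ l) * Polynomial.X) •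
    B.map Polynomial.C)

/-- `det(I - X B)` for a square matrix `B` over `𝔽_q[[t]]`. -/
def charSeriesPS (F : Type*) [Field F] {m : ℕ}
    (B : Matrix (Fin m) (Fin m) (PowerSeries F)) : Polynomial (PowerSeries F) :=
  Matrix.det (1 - (Polynomial.X : Polynomial (PowerSeries F)) • B.map Polynomial.C)

/-- `P^{(k)}(X) = det(I - X·U^{(k)}) ∈ 𝔽_q[t][X]`. -/
def Pser (F : Type*) [Field F] (q k : ℕ) : Polynomial (Polynomial F) :=
  Matrix.det (1 - (Polynomial.X : Polynomial (Polynomial F)) • (Umat F q k).map Polynomial.C)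



lemma intChoose_eq (c d : ℤ) (hc : 0 ≤ c) (hd : 0 ≤ d) :
    intChoose c d = (c.toNat.choose d.toNat : ℤ) := by
  unfold intChoose
  split_ifs with h
  · rfl
  · have : c.toNat < d.toNat := by omega
    rw [Nat.choose_eq_zero_of_lt this, Nat.cast_zero]

lemma intChoose_neg (c d : ℤ) (hd : d < 0) : intChoose c d = 0 := by
  unfold intChoose; rw [if_neg]; omega

lemma choose_add_pow_pow_cast (R : Type*) [CommRing R] (p : ℕ) [Fact p.Prime] [CharP R p]
    (m n j : ℕ) (hj : j < p ^ m) :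
    (((n + p ^ m).choose j : ℕ) : R) = ((n.choose j : ℕ) : R) := by
  have hpoly : ((X + 1 : R[X])) ^ (n + p ^ m) = (X + 1) ^ n * (X ^ (p ^ m) + 1) := by
    haveI : CharP (R[X]) p := charP_of_injective_ringHom (C_injective (R := R)) p
    rw [pow_add, add_pow_char_pow, one_pow]
  have h := congrArg (fun f => Polynomial.coeff f j) hpoly
  simp only [coeff_X_add_one_pow] at h
  rw [h, mul_add, mul_one, coeff_add, coeff_X_add_one_pow, coeff_mul_X_pow']
  rw [if_neg (by omega), zero_add]

lemma intChoose_cast_add {R : Type*} [CommRing R] (p : ℕ) [Fact p.Prime] [CharP R p]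
    (m : ℕ) (c d : ℤ) (hc : 0 ≤ c) (hd : 0 ≤ d) (hdm : d < (p : ℤ) ^ m) :
    ((intChoose (c + (p : ℤ) ^ m) d : ℤ) : R) = ((intChoose c d : ℤ) : R) := by
  rw [intChoose_eq _ _ (by positivity) hd, intChoose_eq _ _ hc hd]
  have h1 : (c + (p : ℤ) ^ m).toNat = c.toNat + p ^ m := by
    have : ((p : ℤ)) ^ m = ((p ^ m : ℕ) : ℤ) := by push_cast; ring
    omega
  rw [h1]
  exact_mod_cast choose_add_pow_pow_cast R p m c.toNat d.toNat (by omega)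

/-- For `k ≥ 2` and `m ≥ 1`, for every column index `j ≤ min(k-2, p^m-1)` and every row
index `i ≤ k-2`, the corresponding entries of `U^{(k+p^m)}` and `U^{(k)}` are equal
in `𝔽_q[t]`. -/
theorem Umat_entry_eq_of_small_col
    (p q : ℕ) (hp : p.Prime) (hq : ∃ e : ℕ, 1 ≤ e ∧ q = p ^ e)
    (F : Type) [Field F] [Fintype F] (hF : Fintype.card F = q)
    (k m : ℕ) (hk : 2 ≤ k) (hm : 1 ≤ m)
    (i j : Fin (k + p ^ m - 1)) (i' j' : Fin (k - 1))
    (hi : (i : ℕ) = (i' : ℕ)) (hj : (j : ℕ) = (j' : ℕ))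
    (hjle : (j : ℕ) ≤ min (k - 2) (p ^ m - 1)) :
    Umat F q (k + p ^ m) i j = Umat F q k i' j' := by
  haveI : Fact p.Prime := ⟨hp⟩
  obtain ⟨e, he, rfl⟩ := hq
  haveI : CharP F p := by
    obtain ⟨n, hr, hcard⟩ := FiniteField.card F (ringChar F)
    have hdvd : p ∣ ringChar F := by
      have : p ∣ ringChar F ^ (n : ℕ) := by
        rw [← hcard, hF]
        exact dvd_pow_self p (by omega)
      exact hp.dvd_of_dvd_pow this
    have : p = ringChar F := ((Nat.prime_dvd_prime_iff_eq hp hr).mp hdvd)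
    rw [this]; exact ringChar.charP F
  haveI : CharP (Polynomial F) p := charP_of_injective_ringHom (C_injective (R := F)) p
  have hpm : 1 ≤ p ^ m := Nat.one_le_pow _ _ hp.pos
  have hJk : (j : ℕ) ≤ k - 2 := le_trans hjle (min_le_left _ _)
  have hJp : (j : ℕ) ≤ p ^ m - 1 := le_trans hjle (min_le_right _ _)
  have hppm : 2 ≤ p ^ m := by
    calc 2 ≤ p := hp.two_le
    _ = p ^ 1 := (pow_one p).symm
    _ ≤ p ^ m := Nat.pow_le_pow_right hp.pos hm
  have hIk : (i : ℕ) ≤ k - 2 := by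
    have := i'.isLt; omega
  have hJZ : ((j : ℕ) : ℤ) < (p : ℤ) ^ m := by
    have h1 : ((p ^ m : ℕ) : ℤ) = (p : ℤ) ^ m := by push_cast; ring
    omega
  show Uent F (p ^ e) (k + p ^ m) (i : ℕ) (j : ℕ) = Uent F (p ^ e) k (i' : ℕ) (j' : ℕ)
  rw [← hi, ← hj]
  unfold Uent
  have hshift : (((k + p ^ m : ℕ)) : ℤ) - 2 - ((j : ℕ) : ℤ)
      = ((k : ℤ) - 2 - ((j : ℕ) : ℤ)) + (p : ℤ) ^ m := by push_cast; ring
  have hshift' : (((k + p ^ m : ℕ)) : ℤ) - 2 - ((i : ℕ) : ℤ)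
      = ((k : ℤ) - 2 - ((i : ℕ) : ℤ)) + (p : ℤ) ^ m := by push_cast; ring
  split_ifs with h1 h2
  · congr 1
    rw [hshift]
    exact intChoose_cast_add p m _ _ (by omega) (by positivity) hJZ
  · rw [hshift']
    have hA : ((intChoose (((k : ℤ) - 2 - ((i : ℕ) : ℤ)) + (p : ℤ) ^ m)
        (((j : ℕ) : ℤ) - ((i : ℕ) : ℤ)) : ℤ) : Polynomial F)
        = ((intChoose ((k : ℤ) - 2 - ((i : ℕ) : ℤ)) (((j : ℕ) : ℤ) - ((i : ℕ) : ℤ)) : ℤ) :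
            Polynomial F) := by
      rcases lt_or_ge (((j : ℕ) : ℤ) - ((i : ℕ) : ℤ)) 0 with hneg | hpos
      · rw [intChoose_neg _ _ hneg, intChoose_neg _ _ hneg]
      · exact intChoose_cast_add p m _ _ (by omega) hpos (by omega)
    have hB : ((intChoose (((k : ℤ) - 2 - ((i : ℕ) : ℤ)) + (p : ℤ) ^ m) ((j : ℕ) : ℤ) : ℤ) :
          Polynomial F)
        = ((intChoose ((k : ℤ) - 2 - ((i : ℕ) : ℤ)) ((j : ℕ) : ℤ) : ℤ) : Polynomial F) := by
      exact intChoose_cast_add p m _ _ (by omega) (by positivity) hJZ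
    push_cast [Int.cast_add, Int.cast_mul] at hA hB ⊢
    rw [hA, hB]
  · rfl


end DrinfeldGM
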